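/- Let H be a real Hilbert space with a Hilbert (orthonormal) basis (e_j)_{j ≥ 1}. Let (λ'_j)_{j ≥ 1} be a nondecreasing sequence of nonnegative reals, let 0 = N_0 < N_1 < N_2 < … be a strictly increasing sequence of integers, and let (λ_j)_{j ≥ 1} be a nondecreasing sequence with λ_j ≥ λ'_j for all j and λ_{N_{k-1}+1} = λ_{N_k} for every k ≥ 1. For m ≥ 1 set δ_m = max_{1 ≤ j ≤ m} (λ_j − λ'_j), and for i ≥ 1 set Λ_i = min_{1 ≤ j ≤ i} (λ_{N_j+1} − λ_{N_j}), assumed positive. For each i ≥ 1 let P_i denote the orthogonal projection of H onto span{e_j : N_{i-1} < j ≤ N_i}. Fix i ≥ 1 and let f ∈ H with ‖f‖ = 1 be such that the series Σ_{j ≥ 1} λ'_j ⟨f, e_j⟩² converges with sum λ_{N_{i-1}+1}. If δ_{N_i+1} ≤ Λ_i/2, then 1 − ‖P_i(f)‖² ≤ (2/Λ_i) (δ_{N_{i-1}+1} + λ'_{N_i+1} Σ_{j=1}^{i-1} ‖P_j(f)‖²). -/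

import Mathlib

open RealInnerProductSpace

/-- Proposition 4.2 (technical proposition). Indices are shifted: the Lean index
`j : ℕ` corresponds to the paper index `j+1`, so that `e j`, `lam j`, `lam' j`
stand for the paper's `e_{j+1}`, `λ_{j+1}`, `λ'_{j+1}`, while `N` is as in the
paper (`N 0 = 0`).  The orthogonal projection `P_i` of the paper onto
`span{e_j : N_{i-1} < j ≤ N_i}` is written explicitly as
`f ↦ ∑_{j ∈ [N_{i-1}, N_i)} ⟪f, e j⟫ • e j` using the orthonormality of `e`. -/
theorem stmt13 {H : Type*} [NormedAddCommGroup H] [InnerProductSpace ℝ H]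
    [CompleteSpace H]
    (e : HilbertBasis ℕ ℝ H)
    (lam' lam : ℕ → ℝ) (N : ℕ → ℕ)
    (hlam'0 : ∀ j, 0 ≤ lam' j) (hlam'mono : Monotone lam')
    (hN0 : N 0 = 0) (hNmono : StrictMono N)
    (hlammono : Monotone lam) (hle : ∀ j, lam' j ≤ lam j)
    (hblock : ∀ k, 1 ≤ k → lam (N (k - 1)) = lam (N k - 1))
    (δ Λ : ℕ → ℝ)
    (hδ : ∀ m (hm : 1 ≤ m), δ m =
      (Finset.range m).sup' (Finset.nonempty_range_iff.mpr (by omega))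
        (fun j => lam j - lam' j))
    (hΛ : ∀ i (hi : 1 ≤ i), Λ i =
      (Finset.Icc 1 i).inf' (Finset.nonempty_Icc.mpr (by omega))
        (fun j => lam (N j) - lam (N j - 1)))
    (hΛpos : ∀ i, 1 ≤ i → 0 < Λ i)
    (i : ℕ) (hi : 1 ≤ i) (f : H) (hf : ‖f‖ = 1)
    (heig : HasSum (fun j => lam' j * ⟪f, e j⟫ ^ 2) (lam (N (i - 1))))
    (hδΛ : δ (N i + 1) ≤ Λ i / 2) :
    1 - ‖∑ j ∈ Finset.Ico (N (i - 1)) (N i), ⟪f, e j⟫ • (e j : H)‖ ^ 2 ≤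
      2 / Λ i *
        (δ (N (i - 1) + 1) +
          lam' (N i) *
            ∑ j ∈ Finset.Icc 1 (i - 1),
              ‖∑ m ∈ Finset.Ico (N (j - 1)) (N j), ⟪f, e m⟫ • (e m : H)‖ ^ 2) := by
  classical
  set c : ℕ → ℝ := fun j => ⟪f, e j⟫ ^ 2 with hc
  have hc0 : ∀ j, 0 ≤ c j := fun j => sq_nonneg _
  -- Parseval
  have hA : HasSum c 1 := by
    have h := e.hasSum_inner_mul_inner f f
    have h2 : (⟪f, f⟫ : ℝ) = 1 := by
      rw [real_inner_self_eq_norm_sq, hf]; norm_num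
    rw [h2] at h
    have hfun : (fun j => (⟪f, e j⟫ : ℝ) * ⟪e j, f⟫) = c := by
      funext j
      show (⟪f, e j⟫ : ℝ) * ⟪e j, f⟫ = ⟪f, e j⟫ ^ 2
      rw [real_inner_comm (e j) f, sq]
    rwa [hfun] at h
  -- norms of partial sums
  have hnorm : ∀ s : Finset ℕ,
      ‖∑ j ∈ s, ⟪f, e j⟫ • (e j : H)‖ ^ 2 = ∑ j ∈ s, c j := by
    intro s
    have h := e.orthonormal.inner_sum (fun j => ⟪f, e j⟫) (fun j => ⟪f, e j⟫) s
    rw [← real_inner_self_eq_norm_sq, h]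
    simp [hc, sq]
  set lam0 := lam (N (i - 1)) with hlam0
  -- key spectral facts
  have hNi1 : N (i - 1) < N i := hNmono (by omega)
  have hΛle : Λ i ≤ lam (N i) - lam (N i - 1) := by
    rw [hΛ i hi]
    exact Finset.inf'_le _ (Finset.mem_Icc.mpr ⟨hi, le_refl i⟩)
  have hblocki : lam0 = lam (N i - 1) := hblock i hi
  have hNige : lam0 + Λ i ≤ lam (N i) := by
    rw [hblocki]; linarith
  have hδ2 : lam (N i) - lam' (N i) ≤ δ (N i + 1) := by
    rw [hδ (N i + 1) (by omega)]
    exact Finset.le_sup' (fun j => lam j - lam' j) (Finset.self_mem_range_succ (N i))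
  have hstar : lam0 + Λ i / 2 ≤ lam' (N i) := by linarith
  set δ1 := δ (N (i - 1) + 1) with hδ1def
  have hδ1 : lam0 - lam' (N (i - 1)) ≤ δ1 := by
    rw [hδ1def, hδ (N (i - 1) + 1) (by omega)]
    exact Finset.le_sup' (fun j => lam j - lam' j) (Finset.self_mem_range_succ (N (i - 1)))
  have hδ1nn : 0 ≤ δ1 := le_trans (by linarith [hle (N (i - 1))]) hδ1
  have hlam0nn : 0 ≤ lam0 := le_trans (hlam'0 _) (hle _)
  -- the zero-sum series g
  have hB : HasSum (fun j => lam' j * c j) lam0 := heig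
  have hG : HasSum (fun j => (lam' j - lam0) * c j) 0 := by
    have := hB.sub (hA.mul_left lam0)
    simpa [sub_mul, mul_one] using this
  -- tail sums
  set S1 := ∑ j ∈ Finset.range (N (i - 1)), c j with hS1
  set Sb := ∑ j ∈ Finset.Ico (N (i - 1)) (N i), c j with hSb
  have hS1nn : 0 ≤ S1 := Finset.sum_nonneg fun j _ => hc0 j
  have hSbnn : 0 ≤ Sb := Finset.sum_nonneg fun j _ => hc0 j
  have hSfull : ∑ j ∈ Finset.range (N i), c j = S1 + Sb := by
    rw [hS1, hSb, Finset.sum_range_add_sum_Ico _ (le_of_lt hNi1)]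
  have hSble : Sb ≤ 1 :=
    sum_le_hasSum (Finset.Ico (N (i - 1)) (N i)) (fun j _ => hc0 j) hA
  -- tail HasSums
  have hAtail : HasSum (fun n => c (n + N i)) (1 - (S1 + Sb)) := by
    rw [← hSfull]
    exact (hasSum_nat_add_iff' (N i)).mpr hA
  have hGtail : HasSum (fun n => (lam' (n + N i) - lam0) * c (n + N i))
      (0 - ∑ j ∈ Finset.range (N i), (lam' j - lam0) * c j) :=
    (hasSum_nat_add_iff' (N i)).mpr hG
  -- termwise bound on the tail
  have htail_le : Λ i / 2 * (1 - (S1 + Sb)) ≤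
      0 - ∑ j ∈ Finset.range (N i), (lam' j - lam0) * c j := by
    refine hasSum_le (fun n => ?_) (hAtail.mul_left (Λ i / 2)) hGtail
    have h1 : lam' (N i) ≤ lam' (n + N i) := hlam'mono (by omega)
    have h2 : Λ i / 2 ≤ lam' (n + N i) - lam0 := by linarith
    exact mul_le_mul_of_nonneg_right h2 (hc0 _)
  -- bound the finite part
  have hlow : ∑ j ∈ Finset.range (N (i - 1)), (lam0 - lam' j) * c j ≤
      (lam' (N i) - Λ i / 2) * S1 := by
    rw [hS1, Finset.mul_sum]
    refine Finset.sum_le_sum fun j _ => ?_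
    have : lam0 - lam' j ≤ lam' (N i) - Λ i / 2 := by
      have := hlam'0 j; linarith
    exact mul_le_mul_of_nonneg_right this (hc0 j)
  have hblk : ∑ j ∈ Finset.Ico (N (i - 1)) (N i), (lam0 - lam' j) * c j ≤ δ1 := by
    calc ∑ j ∈ Finset.Ico (N (i - 1)) (N i), (lam0 - lam' j) * c j
        ≤ ∑ j ∈ Finset.Ico (N (i - 1)) (N i), δ1 * c j := by
          refine Finset.sum_le_sum fun j hj => ?_
          have hj' : N (i - 1) ≤ j := (Finset.mem_Ico.mp hj).1
          have : lam' (N (i - 1)) ≤ lam' j := hlam'mono hj'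
          exact mul_le_mul_of_nonneg_right (by linarith) (hc0 j)
      _ = δ1 * Sb := by rw [hSb, Finset.mul_sum]
      _ ≤ δ1 * 1 := mul_le_mul_of_nonneg_left hSble hδ1nn
      _ = δ1 := mul_one _
  have hsplit : 0 - ∑ j ∈ Finset.range (N i), (lam' j - lam0) * c j =
      (∑ j ∈ Finset.range (N (i - 1)), (lam0 - lam' j) * c j) +
      (∑ j ∈ Finset.Ico (N (i - 1)) (N i), (lam0 - lam' j) * c j) := by
    rw [Finset.sum_range_add_sum_Ico (fun j => (lam0 - lam' j) * c j) (le_of_lt hNi1),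
      zero_sub, ← Finset.sum_neg_distrib]
    exact Finset.sum_congr rfl fun j _ => by ring
  have hmain : Λ i / 2 * (1 - (S1 + Sb)) ≤ δ1 + (lam' (N i) - Λ i / 2) * S1 := by
    rw [hsplit] at htail_le
    linarith
  -- identify sums in the goal
  have hgoal1 : ‖∑ j ∈ Finset.Ico (N (i - 1)) (N i), ⟪f, e j⟫ • (e j : H)‖ ^ 2 = Sb :=
    hnorm _
  have hgoal2 : ∑ j ∈ Finset.Icc 1 (i - 1),
      ‖∑ m ∈ Finset.Ico (N (j - 1)) (N j), ⟪f, e m⟫ • (e m : H)‖ ^ 2 = S1 := by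
    have key : ∀ k : ℕ, ∑ j ∈ Finset.Icc 1 k, ∑ m ∈ Finset.Ico (N (j - 1)) (N j), c m
        = ∑ m ∈ Finset.range (N k), c m := by
      intro k
      induction k with
      | zero => simp [hN0]
      | succ n ih =>
        rw [show Finset.Icc 1 (n + 1) = insert (n + 1) (Finset.Icc 1 n) by
            ext x; simp [Finset.mem_Icc, Finset.mem_insert]; omega,
          Finset.sum_insert (by simp), ih]
        have hmono : N n ≤ N (n + 1) := le_of_lt (hNmono (by omega))
        rw [add_comm, ← Finset.sum_range_add_sum_Ico _ hmono]
        simp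
    rw [hS1, ← key (i - 1)]
    exact Finset.sum_congr rfl fun j _ => hnorm _
  rw [hgoal1, hgoal2]
  have hΛ' := hΛpos i hi
  rw [div_mul_eq_mul_div, le_div_iff₀ hΛ']
  nlinarith [hmain]
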